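/- (Corollary 3.6) Suppose a discrete form Ω : ℤ⁴ → Cl satisfies the discrete Joyce equation iDΩ = mΩe₀. For signs s, t ∈ {1, −1} put X_{s,t} := Ω P_{s0} P_{t12}, where P_{s0} = ½(1+s·e₀) and P_{t12} = ½(1+t·i e₁e₂). Then Ω = X_{1,1} + X_{1,−1} + X_{−1,1} + X_{−1,−1}, and each part satisfies both the discrete Dirac–Kähler equation and the discrete Hestenes equation with the corresponding signs: iD X_{s,t} = s·m·X_{s,t} and −(D X_{s,t})e₁e₂ = t·m·X_{s,t} e₀. -/
import Mathlib


noncomputable section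

/-- The Minkowski quadratic form `Q v = v₀² − v₁² − v₂² − v₃²` on `ℂ⁴`. -/
def Q : QuadraticForm ℂ (Fin 4 → ℂ) :=
  QuadraticMap.weightedSumSquares ℂ ![(1 : ℂ), -1, -1, -1]

/-- The Clifford algebra of spacetime over `ℂ`. -/
abbrev Cl : Type := CliffordAlgebra Q

/-- The generators `e_μ`, images of the standard basis vectors. -/
def e (μ : Fin 4) : Cl := CliffordAlgebra.ι Q (Pi.single μ 1)

/-- The volume element `e = e₀e₁e₂e₃`. -/
def eV : Cl := e 0 * e 1 * e 2 * e 3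

/-- The difference operator `(Δ_μ Ω)(k) = Ω(k + 1_μ) − Ω(k)`. -/
def Δ (μ : Fin 4) (Ω : (Fin 4 → ℤ) → Cl) : (Fin 4 → ℤ) → Cl :=
  fun k => Ω (k + Pi.single μ 1) - Ω k

/-- The discrete Dirac operator `DΩ = Σ_μ e_μ · (Δ_μ Ω)`. -/
def Dirac (Ω : (Fin 4 → ℤ) → Cl) : (Fin 4 → ℤ) → Cl :=
  fun k => ∑ μ : Fin 4, e μ * Δ μ Ω k

/-- The projectors `P_{s0} = ½(1 + s e₀)` for `s = ±1`. -/
def P0 (s : ℂ) : Cl := (2⁻¹ : ℂ) • (1 + s • e 0)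

/-- The projectors `P_{t12} = ½(1 + t i e₁e₂)` for `t = ±1`. -/
def P12 (t : ℂ) : Cl := (2⁻¹ : ℂ) • (1 + (t * Complex.I) • (e 1 * e 2))

lemma Qval (μ : Fin 4) : Q (Pi.single μ 1) = ![(1:ℂ),-1,-1,-1] μ := by
  simp [Q, QuadraticMap.weightedSumSquares_apply, Fin.sum_univ_four, Pi.single_apply]

lemma e_sq (μ : Fin 4) : e μ * e μ = algebraMap ℂ Cl (![(1:ℂ),-1,-1,-1] μ) := by
  rw [e, CliffordAlgebra.ι_sq_scalar, Qval]

lemma e00 : e 0 * e 0 = 1 := by rw [e_sq]; simp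
lemma e11 : e 1 * e 1 = -1 := by rw [e_sq]; simp
lemma e22 : e 2 * e 2 = -1 := by rw [e_sq]; simp

lemma anticomm (μ ν : Fin 4) (h : μ ≠ ν) : e μ * e ν = - (e ν * e μ) := by
  have := CliffordAlgebra.ι_mul_ι_add_swap (Q := Q) (Pi.single μ 1) (Pi.single ν 1)
  have hp : QuadraticMap.polar Q (Pi.single μ 1) (Pi.single ν 1) = 0 := by
    simp [QuadraticMap.polar, Q, QuadraticMap.weightedSumSquares_apply, Fin.sum_univ_four,
      Pi.single_apply]
    fin_cases μ <;> fin_cases ν <;> simp_all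
  rw [hp] at this
  simp only [map_zero] at this
  simp only [e]
  exact eq_neg_of_add_eq_zero_left this

lemma e12_sq : (e 1 * e 2) * (e 1 * e 2) = -1 := by
  have h := anticomm 2 1 (by decide)
  calc (e 1 * e 2) * (e 1 * e 2) = e 1 * (e 2 * e 1) * e 2 := by noncomm_ring
  _ = e 1 * (-(e 1 * e 2)) * e 2 := by rw [h]
  _ = -((e 1 * e 1) * (e 2 * e 2)) := by noncomm_ring
  _ = -1 := by rw [e11, e22]; simp

lemma e0_comm12 : e 0 * (e 1 * e 2) = (e 1 * e 2) * e 0 := by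
  have h1 := anticomm 0 1 (by decide); have h2 := anticomm 0 2 (by decide)
  calc e 0 * (e 1 * e 2) = (e 0 * e 1) * e 2 := by noncomm_ring
  _ = (-(e 1 * e 0)) * e 2 := by rw [h1]
  _ = e 1 * (-(e 0 * e 2)) := by noncomm_ring
  _ = e 1 * (-(-(e 2 * e 0))) := by rw [h2]
  _ = (e 1 * e 2) * e 0 := by noncomm_ring

lemma P0sum : P0 1 + P0 (-1) = 1 := by simp [P0]; module
lemma P12sum : P12 1 + P12 (-1) = 1 := by simp [P12]; module

lemma e0_P0 (s : ℂ) (hs : s * s = 1) : e 0 * P0 s = s • P0 s := by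
  simp only [P0, mul_smul_comm, smul_smul, mul_add, mul_one, smul_add, mul_smul_comm, e00]
  match_scalars <;> first | ring1 | linear_combination (2⁻¹:ℂ) * hs | linear_combination (-(2⁻¹:ℂ)) * hs

lemma P0_e0 (s : ℂ) (hs : s * s = 1) : P0 s * e 0 = s • P0 s := by
  simp only [P0, smul_mul_assoc, add_mul, one_mul, smul_mul_assoc, e00]
  match_scalars <;> first | ring1 | linear_combination (2⁻¹:ℂ) * hs | linear_combination (-(2⁻¹:ℂ)) * hs

lemma P12_e12 (t : ℂ) (ht : t * t = 1) :
    P12 t * (e 1 * e 2) = (-(t * Complex.I)) • P12 t := by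
  simp only [P12, smul_mul_assoc, add_mul, one_mul, smul_mul_assoc, e12_sq, smul_smul]
  match_scalars <;>
    first
    | ring1
    | linear_combination (Complex.I * Complex.I * 2⁻¹) * ht + (2⁻¹ : ℂ) * Complex.I_mul_I
    | linear_combination (-(Complex.I * Complex.I * 2⁻¹)) * ht - (2⁻¹ : ℂ) * Complex.I_mul_I

lemma P12_e0 (t : ℂ) : P12 t * e 0 = e 0 * P12 t := by
  simp only [P12, smul_mul_assoc, mul_smul_comm, add_mul, mul_add, one_mul, mul_one,
    smul_mul_assoc, mul_smul_comm, e0_comm12]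

lemma Dirac_mul (Ω : (Fin 4 → ℤ) → Cl) (c : Cl) (k : Fin 4 → ℤ) :
    Dirac (fun k => Ω k * c) k = Dirac Ω k * c := by
  simp [Dirac, Δ, Finset.sum_mul, sub_mul, mul_assoc]

/-- Corollary 3.6: a solution `Ω` of the discrete Joyce equation `iDΩ = mΩe₀`
decomposes into the four parts `X_{s,t} = Ω P_{s0} P_{t12}`, each satisfying
`iD X_{s,t} = s m X_{s,t}` and `−(D X_{s,t})e₁e₂ = t m X_{s,t} e₀`. -/
theorem stmt_8 (m : ℝ) (Ω : (Fin 4 → ℤ) → Cl)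
    (hΩ : ∀ k, Complex.I • Dirac Ω k = (m : ℂ) • (Ω k * e 0)) :
    (∀ k, Ω k = Ω k * P0 1 * P12 1 + Ω k * P0 1 * P12 (-1)
            + Ω k * P0 (-1) * P12 1 + Ω k * P0 (-1) * P12 (-1)) ∧
    (∀ s t : ℂ, (s = 1 ∨ s = -1) → (t = 1 ∨ t = -1) →
      (∀ k, Complex.I • Dirac (fun k => Ω k * P0 s * P12 t) k =
        (s * (m : ℂ)) • (Ω k * P0 s * P12 t)) ∧
      (∀ k, -(Dirac (fun k => Ω k * P0 s * P12 t) k * (e 1 * e 2)) =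
        (t * (m : ℂ)) • ((Ω k * P0 s * P12 t) * e 0))) := by
  have hD : ∀ k, Dirac Ω k = (-(Complex.I) * (m : ℂ)) • (Ω k * e 0) := by
    intro k
    have h2 : Dirac Ω k = (-Complex.I) • ((m : ℂ) • (Ω k * e 0)) := by
      rw [← hΩ k, smul_smul, neg_mul, Complex.I_mul_I, neg_neg, one_smul]
    rw [h2, smul_smul]
  constructor
  · intro k
    have : Ω k * P0 1 * P12 1 + Ω k * P0 1 * P12 (-1)
            + Ω k * P0 (-1) * P12 1 + Ω k * P0 (-1) * P12 (-1)
        = Ω k * ((P0 1 + P0 (-1)) * (P12 1 + P12 (-1))) := by noncomm_ring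
    rw [this, P0sum, P12sum, one_mul, mul_one]
  · intro s t hs ht
    have hs2 : s * s = 1 := by rcases hs with h | h <;> rw [h] <;> ring
    have ht2 : t * t = 1 := by rcases ht with h | h <;> rw [h] <;> ring
    have hDX : ∀ k, Dirac (fun k => Ω k * P0 s * P12 t) k
        = Dirac Ω k * (P0 s * P12 t) := by
      intro k
      have hfun : (fun k => Ω k * P0 s * P12 t) = fun k => Ω k * (P0 s * P12 t) := by
        funext k; rw [mul_assoc]
      rw [hfun, Dirac_mul]
    have key : ∀ k, Ω k * e 0 * (P0 s * P12 t) = s • (Ω k * P0 s * P12 t) := by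
      intro k
      rw [← mul_assoc, mul_assoc (Ω k), e0_P0 s hs2, mul_smul_comm, smul_mul_assoc]
    constructor
    · intro k
      rw [hDX k, hD k, smul_mul_assoc, smul_smul, key k, smul_smul]
      congr 1
      have := Complex.I_mul_I
      linear_combination (-(m : ℂ)) * s * this
    · intro k
      rw [hDX k, hD k]
      have lhs1 : (-(Complex.I) * (m : ℂ)) • (Ω k * e 0) * (P0 s * P12 t) * (e 1 * e 2)
          = (-(Complex.I) * (m : ℂ)) • (Ω k * e 0 * (P0 s * (P12 t * (e 1 * e 2)))) := by
        rw [smul_mul_assoc, smul_mul_assoc, mul_assoc (Ω k * e 0), mul_assoc (P0 s)]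
      rw [lhs1, P12_e12 t ht2, mul_smul_comm, mul_smul_comm, smul_smul]
      rw [key k]
      have rhs1 : Ω k * P0 s * P12 t * e 0 = s • (Ω k * P0 s * P12 t) := by
        rw [mul_assoc, P12_e0, ← mul_assoc, mul_assoc (Ω k), ← mul_assoc, mul_assoc (Ω k),
          P0_e0 s hs2, mul_smul_comm, smul_mul_assoc]
      rw [rhs1, smul_smul, smul_smul, ← neg_smul]
      congr 1
      have := Complex.I_mul_I
      linear_combination (-(m : ℂ)) * s * t * this
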